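/- Let x̄ ∈ ℝ^d, f(w) = −⟨w, x̄⟩ + 2‖x̄‖·max(‖w‖ − 1, 0) with minimizer w* (= x̄/‖x̄‖ if x̄ ≠ 0). Then for every w ∈ ℝ^d: f(w) − f(w*) ≥ 2‖x̄‖ · min(1, (1/4)‖w − w*‖²). -/

import Mathlib

/-- Combined growth bound:
`f(w) − f(w*) ≥ 2‖x̄‖·min(1, (1/4)‖w − w*‖²)` for all `w`. -/
theorem lb_combined_growth {d : ℕ} (xb : EuclideanSpace ℝ (Fin d))
    (f : EuclideanSpace ℝ (Fin d) → ℝ)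
    (hf : f = fun w => - (inner ℝ w xb : ℝ) + 2 * ‖xb‖ * max (‖w‖ - 1) 0)
    (wstar : EuclideanSpace ℝ (Fin d))
    (hws : xb ≠ 0 → wstar = ‖xb‖⁻¹ • xb) :
    ∀ w, 2 * ‖xb‖ * min 1 ((1 / 4 : ℝ) * ‖w - wstar‖ ^ 2) ≤ f w - f wstar := by
  intro w
  by_cases hx : xb = 0
  · simp [hf, hx]
  · have hR : (0:ℝ) < ‖xb‖ := norm_pos_iff.mpr hx
    have hu := hws hx
    have hnu : ‖wstar‖ = 1 := by
      rw [hu, norm_smul, norm_inv, norm_norm, inv_mul_cancel₀ hR.ne']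
    have hIu : (inner ℝ w wstar : ℝ) = ‖xb‖⁻¹ * (inner ℝ w xb : ℝ) := by
      rw [hu, real_inner_smul_right]
    have hIs : (inner ℝ wstar xb : ℝ) = ‖xb‖ := by
      rw [hu, real_inner_smul_left, real_inner_self_eq_norm_sq]
      field_simp
    have hsq : ‖w - wstar‖ ^ 2 = ‖w‖ ^ 2 - 2 * (inner ℝ w wstar : ℝ) + 1 := by
      rw [← real_inner_self_eq_norm_sq, inner_sub_sub_self,
        real_inner_self_eq_norm_sq, real_inner_self_eq_norm_sq,
        real_inner_comm wstar w, hnu]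
      ring
    have htri : ‖w‖ - 1 ≤ ‖w - wstar‖ := by
      have := norm_sub_norm_le w wstar
      rw [hnu] at this; linarith
    have hInn : (inner ℝ w xb : ℝ) =
        ‖xb‖ * ((‖w‖ ^ 2 + 1 - ‖w - wstar‖ ^ 2) / 2) := by
      have : (inner ℝ w wstar : ℝ) = (‖w‖ ^ 2 + 1 - ‖w - wstar‖ ^ 2) / 2 := by
        linarith [hsq]
      have hIw : (inner ℝ w xb : ℝ) = ‖xb‖ * (inner ℝ w wstar : ℝ) := by
        rw [hIu, ← mul_assoc, mul_inv_cancel₀ hR.ne', one_mul]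
      rw [hIw, this]
    rw [hf]
    simp only [hIs]
    set R := ‖xb‖
    set t := ‖w‖
    set s := ‖w - wstar‖
    have hs0 : 0 ≤ s := norm_nonneg _
    have ht0 : 0 ≤ t := norm_nonneg _
    have hws1 : max (1 - 1) (0:ℝ) = 0 := by norm_num
    rw [hnu, hws1]
    rw [hInn]
    rcases le_or_gt t 3 with ht3 | ht3
    · have hmin : min 1 ((1/4:ℝ) * s ^ 2) ≤ (1/4) * s ^ 2 := min_le_right _ _
      rcases le_or_gt t 1 with ht1 | ht1
      · rw [max_eq_right (by linarith)]
        nlinarith [mul_le_mul_of_nonneg_left hmin (by positivity : (0:ℝ) ≤ 2 * R),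
          mul_nonneg hR.le (sq_nonneg (1 - t)), mul_nonneg hR.le (mul_nonneg ht0 (by linarith : (0:ℝ) ≤ 1 - t))]
      · rw [max_eq_left (by linarith)]
        nlinarith [mul_le_mul_of_nonneg_left hmin (by positivity : (0:ℝ) ≤ 2 * R),
          mul_nonneg hR.le (mul_nonneg (by linarith : (0:ℝ) ≤ t - 1) (by linarith : (0:ℝ) ≤ 3 - t))]
    · have hmin : min 1 ((1/4:ℝ) * s ^ 2) ≤ 1 := min_le_left _ _
      rw [max_eq_left (by linarith)]
      have hst : t - 1 ≤ s := htri
      nlinarith [mul_le_mul_of_nonneg_left hmin (by positivity : (0:ℝ) ≤ 2 * R),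
        mul_nonneg hR.le (sq_nonneg (s - (t - 1))),
        mul_le_mul_of_nonneg_left hst hR.le,
        mul_nonneg hR.le (mul_nonneg (by linarith : (0:ℝ) ≤ t - 1) (sq_nonneg (s - (t-1))))]
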